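/- arXiv:0809.0965 — 3 statements merged into one kernel-verified Lean document; each statement's English description precedes it below -/
import Mathlib

section
/- Let f : [α,β] → ℝ be continuous on [α,β] with right derivative equal to 0 at every point of (α,β). Then f is constant on [α,β]. -/
theorem stmt_4 (α β : ℝ) (hab : α < β) (f : ℝ → ℝ)
    (hf : ContinuousOn f (Set.Icc α β))
    (hf' : ∀ x ∈ Set.Ioo α β, HasDerivWithinAt f 0 (Set.Ici x) x) :
    ∀ x ∈ Set.Icc α β, f x = f α := by
  -- Step 1: f is constant (= f β backwards) on each [c, β] with c ∈ (α, β)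
  have key : ∀ c ∈ Set.Ioo α β, ∀ x ∈ Set.Icc c β, f x = f c := by
    intro c hc
    apply constant_of_has_deriv_right_zero
    · exact hf.mono (Set.Icc_subset_Icc hc.1.le le_rfl)
    · intro y hy
      exact hf' y ⟨lt_of_lt_of_le hc.1 hy.1, hy.2⟩
  have hconst : ∀ c ∈ Set.Ioo α β, f c = f β := by
    intro c hc
    exact (key c hc β ⟨hc.2.le, le_rfl⟩).symm
  -- Step 2: f α = f β by continuity
  have hαβ : f α = f β := by
    have h1 : Filter.Tendsto f (nhdsWithin α (Set.Ioo α β)) (nhds (f α)) :=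
      ((hf α (Set.left_mem_Icc.2 hab.le)).mono Set.Ioo_subset_Icc_self).tendsto
    have h2 : Filter.Tendsto f (nhdsWithin α (Set.Ioo α β)) (nhds (f β)) := by
      apply Filter.Tendsto.congr' _ tendsto_const_nhds
      filter_upwards [self_mem_nhdsWithin] with x hx
      exact (hconst x hx).symm
    have hne : (nhdsWithin α (Set.Ioo α β)).NeBot := by
      rw [← mem_closure_iff_nhdsWithin_neBot, closure_Ioo hab.ne]
      exact Set.left_mem_Icc.2 hab.le
    exact tendsto_nhds_unique h1 h2
  intro x hx
  rcases eq_or_lt_of_le hx.1 with h | h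
  · rw [← h]
  rcases eq_or_lt_of_le hx.2 with h2 | h2
  · rw [h2, ← hαβ]
  · rw [hconst x ⟨h, h2⟩, ← hαβ]
end

section
/- Let I be an open interval, a ∈ I, f : I → ℝ continuous at a, and suppose there exists l ∈ ℝ such that the slope P(x,y) = (f(y)-f(x))/(y-x) tends to l as x → a⁻ and y → a⁺ (x < a < y). Then f is differentiable at a with f'(a) = l. -/
theorem stmt_11 (I : Set ℝ) (hI : IsOpen I) (hconn : I.OrdConnected)
    (a : ℝ) (ha : a ∈ I) (f : ℝ → ℝ) (hcont : ContinuousAt f a) (l : ℝ)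
    (hlim : Filter.Tendsto (fun p : ℝ × ℝ => (f p.2 - f p.1) / (p.2 - p.1))
      ((nhdsWithin a (Set.Iio a)) ×ˢ (nhdsWithin a (Set.Ioi a))) (nhds l)) :
    HasDerivAt f l a := by
  rw [hasDerivAt_iff_tendsto_slope, ← nhdsLT_sup_nhdsGT, Filter.tendsto_sup]
  have key : ∀ ε : ℝ, 0 < ε → ∃ U ∈ nhdsWithin a (Set.Iio a), ∃ V ∈ nhdsWithin a (Set.Ioi a),
      ∀ x ∈ U, ∀ y ∈ V, dist ((f y - f x) / (y - x)) l < ε := by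
    intro ε hε
    have h := Metric.tendsto_nhds.mp hlim ε hε
    rw [Filter.eventually_prod_iff] at h
    obtain ⟨p, hp, q, hq, h⟩ := h
    exact ⟨_, hp, _, hq, fun x hx y hy => h hx hy⟩
  constructor
  · rw [Metric.tendsto_nhds]
    intro ε hε
    obtain ⟨U, hU, V, hV, h⟩ := key (ε / 2) (by positivity)
    filter_upwards [hU, self_mem_nhdsWithin] with x hxU hx
    have hx' : x < a := hx
    have h1 : Filter.Tendsto (fun y => (f y - f x) / (y - x)) (nhdsWithin a (Set.Ioi a))
        (nhds ((f a - f x) / (a - x))) := by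
      apply Filter.Tendsto.div
      · exact (hcont.mono_left nhdsWithin_le_nhds).sub tendsto_const_nhds
      · exact ((continuous_id.tendsto a).mono_left nhdsWithin_le_nhds).sub tendsto_const_nhds
      · exact sub_ne_zero.mpr hx'.ne'
    have h2 : dist ((f a - f x) / (a - x)) l ≤ ε / 2 := by
      refine le_of_tendsto (h1.dist tendsto_const_nhds) ?_
      filter_upwards [hV] with y hy
      exact (h x hxU y hy).le
    have heq : slope f a x = (f a - f x) / (a - x) := by
      rw [slope_def_field]
      rw [div_eq_div_iff (sub_ne_zero.mpr hx'.ne) (sub_ne_zero.mpr hx'.ne')]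
      ring
    rw [heq]
    linarith
  · rw [Metric.tendsto_nhds]
    intro ε hε
    obtain ⟨U, hU, V, hV, h⟩ := key (ε / 2) (by positivity)
    filter_upwards [hV, self_mem_nhdsWithin] with y hyV hy
    have hy' : a < y := hy
    have h1 : Filter.Tendsto (fun x => (f y - f x) / (y - x)) (nhdsWithin a (Set.Iio a))
        (nhds ((f y - f a) / (y - a))) := by
      apply Filter.Tendsto.div
      · exact tendsto_const_nhds.sub (hcont.mono_left nhdsWithin_le_nhds)
      · exact tendsto_const_nhds.sub ((continuous_id.tendsto a).mono_left nhdsWithin_le_nhds)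
      · exact sub_ne_zero.mpr hy'.ne'
    have h2 : dist ((f y - f a) / (y - a)) l ≤ ε / 2 := by
      refine le_of_tendsto (h1.dist tendsto_const_nhds) ?_
      filter_upwards [hU] with x hx
      exact (h x hx y hyV).le
    rw [slope_def_field]
    linarith
end

section
/- Let I be an open interval and f : I → ℝ. If f is strictly differentiable at every point of I (i.e., for each a ∈ I the slope (f(y)-f(x))/(y-x) has a limit as (x,y) → (a,a) with x ≠ y), then f is continuously differentiable (C¹) on I. -/
theorem stmt_12 (I : Set ℝ) (hI : IsOpen I) (hconn : I.OrdConnected)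
    (f : ℝ → ℝ)
    (hstrict : ∀ a ∈ I, ∃ l : ℝ,
      Filter.Tendsto (fun p : ℝ × ℝ => (f p.2 - f p.1) / (p.2 - p.1))
        (nhdsWithin (a, a) {p : ℝ × ℝ | p.1 ≠ p.2}) (nhds l)) :
    ContDiffOn ℝ 1 f I := by
  choose! g hg using hstrict
  -- one-variable limit: slope from b tends to g b
  have hT : ∀ a ∈ I, Filter.Tendsto (fun y => (f y - f a) / (y - a))
      (nhdsWithin a {a}ᶜ) (nhds (g a)) := by
    intro a ha
    have h1 : Filter.Tendsto (fun y : ℝ => ((a, y) : ℝ × ℝ)) (nhdsWithin a {a}ᶜ)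
        (nhdsWithin (a, a) {p : ℝ × ℝ | p.1 ≠ p.2}) := by
      rw [tendsto_nhdsWithin_iff]
      constructor
      · exact ((Continuous.prodMk_right a).tendsto a).mono_left nhdsWithin_le_nhds
      · filter_upwards [eventually_mem_nhdsWithin] with y hy
        exact fun h => hy h.symm
    exact (hg a ha).comp h1
  have hderiv : ∀ a ∈ I, HasDerivAt f (g a) a := by
    intro a ha
    rw [hasDerivAt_iff_tendsto_slope]
    have : slope f a = fun y => (f y - f a) / (y - a) := by
      funext y; rw [slope_def_field]
    rw [this]
    exact hT a ha
  have hcont : ContinuousOn g I := by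
    intro a ha
    rw [Metric.continuousWithinAt_iff]
    intro ε hε
    have hev : ∀ᶠ p in nhds ((a, a) : ℝ × ℝ), p.1 ≠ p.2 →
        dist ((f p.2 - f p.1) / (p.2 - p.1)) (g a) < ε / 2 := by
      have := (Metric.tendsto_nhds.1 (hg a ha)) (ε / 2) (by positivity)
      rwa [eventually_nhdsWithin_iff] at this
    rcases Metric.eventually_nhds_iff.1 hev with ⟨δ, hδ0, hδ⟩
    refine ⟨δ, hδ0, fun b hb hba => ?_⟩
    have key : dist (g b) (g a) ≤ ε / 2 := by
      have hTb := hT b hb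
      refine le_of_tendsto (hTb.dist tendsto_const_nhds) ?_
      have h1 : ∀ᶠ y in nhdsWithin b {b}ᶜ, dist y a < δ := by
        apply Filter.Eventually.filter_mono nhdsWithin_le_nhds
        have : Filter.Tendsto (fun y : ℝ => dist y a) (nhds b) (nhds (dist b a)) :=
          (continuous_id.dist continuous_const).tendsto b
        exact this.eventually_lt_const hba
      filter_upwards [h1, eventually_mem_nhdsWithin] with y hy hyb
      have hp : dist ((b, y) : ℝ × ℝ) (a, a) < δ := by
        rw [Prod.dist_eq]
        exact max_lt hba hy
      exact le_of_lt (hδ hp (fun h => hyb h.symm))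
    linarith [key]
  have h1 : (1 : WithTop ℕ∞) = 0 + 1 := by norm_num
  rw [h1, contDiffOn_succ_iff_deriv_of_isOpen hI]
  refine ⟨fun x hx => ((hderiv x hx).differentiableAt).differentiableWithinAt, by simp, ?_⟩
  rw [contDiffOn_zero]
  exact hcont.congr fun b hb => (hderiv b hb).deriv
end
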